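/- Among subsets J ⊆ ℕ satisfying 1 ∈ J and containing at least one of {j, j+1} for every j ∈ ℕ, the quantity |Σ_{j∈J} λ^j − Σ_{j∈ℕ∖J} λ^j| is minimized (for 0 < λ ≤ 1/2) by J = {1, 3, 5, …} = the set of odd positive integers, i.e. for every admissible J, |Σ_{j∈J} λ^j − Σ_{j∉J} λ^j| ≥ |Σ_{j odd} λ^j − Σ_{j even} λ^j| = λ(1−λ)/(1−λ²)·... = λ/(1+λ). -/

import Mathlib

theorem stmt_15 (lam : ℝ) (h0 : 0 < lam) (h1 : lam ≤ 1 / 2)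
    (J : Set ℕ) (hpos : ∀ j ∈ J, 1 ≤ j) (hone : 1 ∈ J)
    (hcons : ∀ j : ℕ, 1 ≤ j → j ∈ J ∨ j + 1 ∈ J) :
    lam / (1 + lam) ≤
      |(∑' j : J, lam ^ (j : ℕ))
        - ∑' j : {j : ℕ | 1 ≤ j ∧ j ∉ J}, lam ^ (j : ℕ)| ∧
    |(∑' j : {j : ℕ | Odd j}, lam ^ (j : ℕ))
        - ∑' j : {j : ℕ | 1 ≤ j ∧ Even j}, lam ^ (j : ℕ)|
      = lam / (1 + lam) := by
  classical
  have hl1 : lam < 1 := by linarith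
  have hl0 : (0:ℝ) ≤ lam := h0.le
  have hsum : Summable (fun j : ℕ => lam ^ j) := summable_geometric_of_lt_one hl0 hl1
  have h1m : (0:ℝ) < 1 - lam := by linarith
  have h1p : (0:ℝ) < 1 + lam := by linarith
  have hsq0 : (0:ℝ) ≤ lam ^ 2 := sq_nonneg lam
  have hsq : lam ^ 2 < 1 := by nlinarith
  have h1msq : (0:ℝ) < 1 - lam ^ 2 := by nlinarith
  have hgeo : ∑' k : ℕ, (lam ^ 2) ^ k = (1 - lam ^ 2)⁻¹ := tsum_geometric_of_lt_one hsq0 hsq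
  -- odd sum
  have hodd : (∑' j : {j : ℕ | Odd j}, lam ^ (j : ℕ)) = lam * (1 - lam ^ 2)⁻¹ := by
    have gbij : Function.Bijective
        (fun k : ℕ => (⟨2 * k + 1, ⟨k, by ring⟩⟩ : {j : ℕ | Odd j})) := by
      constructor
      · intro a b hab
        have hab' : 2 * a + 1 = 2 * b + 1 := congrArg Subtype.val hab; omega
      · rintro ⟨j, hj⟩
        obtain ⟨k, hk⟩ := hj
        exact ⟨k, Subtype.ext (by simp; omega)⟩
    rw [← (Equiv.ofBijective _ gbij).tsum_eq]
    have : ∀ k : ℕ, lam ^ (2 * k + 1) = lam * (lam ^ 2) ^ k := by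
      intro k; rw [pow_add, pow_mul, pow_one]; ring
    simp only [Equiv.ofBijective_apply, this]
    rw [tsum_mul_left, hgeo]
  -- even sum
  have heven : (∑' j : {j : ℕ | 1 ≤ j ∧ Even j}, lam ^ (j : ℕ)) = lam ^ 2 * (1 - lam ^ 2)⁻¹ := by
    have gbij : Function.Bijective
        (fun k : ℕ => (⟨2 * k + 2, ⟨by omega, ⟨k + 1, by ring⟩⟩⟩ : {j : ℕ | 1 ≤ j ∧ Even j})) := by
      constructor
      · intro a b hab
        simp only [Subtype.mk.injEq] at hab; omega
      · rintro ⟨j, hj1, hj2⟩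
        obtain ⟨k, hk⟩ := hj2
        exact ⟨k - 1, Subtype.ext (by simp; omega)⟩
    rw [← (Equiv.ofBijective _ gbij).tsum_eq]
    have : ∀ k : ℕ, lam ^ (2 * k + 2) = lam ^ 2 * (lam ^ 2) ^ k := by
      intro k; rw [pow_add, pow_mul]; ring
    simp only [Equiv.ofBijective_apply, this]
    rw [tsum_mul_left, hgeo]
  -- sum over {j | 1 ≤ j}
  have hge1 : (∑' j : {j : ℕ | 1 ≤ j}, lam ^ (j : ℕ)) = lam * (1 - lam)⁻¹ := by
    have gbij : Function.Bijective
        (fun k : ℕ => (⟨k + 1, by simp only [Set.mem_setOf_eq]; omega⟩ : {j : ℕ | 1 ≤ j})) := by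
      constructor
      · intro a b hab
        simp only [Subtype.mk.injEq] at hab; omega
      · rintro ⟨j, hj⟩
        simp only [Set.mem_setOf_eq] at hj
        exact ⟨j - 1, Subtype.ext (by simp only; omega)⟩
    rw [← (Equiv.ofBijective _ gbij).tsum_eq]
    have : ∀ k : ℕ, lam ^ (k + 1) = lam * lam ^ k := by
      intro k; rw [pow_succ]; ring
    simp only [Equiv.ofBijective_apply, this]
    rw [tsum_mul_left, tsum_geometric_of_lt_one hl0 hl1]
  -- union decomposition
  have hdisj : Disjoint J {j : ℕ | 1 ≤ j ∧ j ∉ J} := by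
    rw [Set.disjoint_left]
    intro j hj hj'
    exact hj'.2 hj
  have hunion : J ∪ {j : ℕ | 1 ≤ j ∧ j ∉ J} = {j : ℕ | 1 ≤ j} := by
    ext j
    simp only [Set.mem_union, Set.mem_setOf_eq]
    constructor
    · rintro (h | h)
      · exact hpos j h
      · exact h.1
    · intro h
      by_cases hJ : j ∈ J
      · exact Or.inl hJ
      · exact Or.inr ⟨h, hJ⟩
  have hAB : (∑' j : J, lam ^ (j : ℕ)) + (∑' j : {j : ℕ | 1 ≤ j ∧ j ∉ J}, lam ^ (j : ℕ))
      = lam * (1 - lam)⁻¹ := by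
    rw [← Summable.tsum_union_disjoint hdisj (hsum.subtype J) (hsum.subtype _), hunion, hge1]
  -- lower bound for sum over J
  -- the picking function
  have hpick : ∀ k : ℕ, ∃ m : ℕ, m ∈ J ∧ 2 * k + 2 ≤ m ∧ m ≤ 2 * k + 3 := by
    intro k
    rcases hcons (2 * k + 2) (by omega) with h | h
    · exact ⟨2 * k + 2, h, by omega, by omega⟩
    · exact ⟨2 * k + 3, h, by omega, by omega⟩
  choose a ha1 ha2 ha3 using hpick
  set φ : ℕ → ℕ := fun k => Nat.rec 1 (fun k _ => a k) k with hφ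
  have hφ0 : φ 0 = 1 := rfl
  have hφs : ∀ k, φ (k + 1) = a k := fun k => rfl
  have hφmem : ∀ k, φ k ∈ J := by
    intro k
    cases k with
    | zero => exact hone
    | succ n => exact ha1 n
  have hφub : ∀ k, φ k ≤ 2 * k + 1 := by
    intro k
    cases k with
    | zero => simp [hφ0]
    | succ n => rw [hφs]; have := ha3 n; omega
  have hφmono : StrictMono φ := by
    apply strictMono_nat_of_lt_succ
    intro k
    have h2 := ha2 k
    have := hφub k
    rw [hφs]
    omega
  -- comparison function ψ
  set ψ : ℕ → ℕ := fun k => Nat.rec 1 (fun k _ => 2 * k + 3) k with hψ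
  have hψ0 : ψ 0 = 1 := rfl
  have hψs : ∀ k, ψ (k + 1) = 2 * k + 3 := fun k => rfl
  have hφψ : ∀ k, φ k ≤ ψ k := by
    intro k
    cases k with
    | zero => simp [hφ0, hψ0]
    | succ n => rw [hφs, hψs]; exact ha3 n
  have hψk : ∀ k, k ≤ ψ k := by
    intro k
    cases k with
    | zero => simp [hψ0]
    | succ n => rw [hψs]; omega
  have hfsum : Summable (fun k : ℕ => lam ^ ψ k) := by
    apply Summable.of_nonneg_of_le (fun k => pow_nonneg hl0 _)
      (fun k => pow_le_pow_of_le_one hl0 hl1.le (hψk k)) hsum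
  have hlow : lam + lam ^ 3 * (1 - lam ^ 2)⁻¹ ≤ ∑' j : J, lam ^ (j : ℕ) := by
    have hle : (∑' k : ℕ, lam ^ ψ k) ≤ ∑' j : J, lam ^ (j : ℕ) := by
      apply Summable.tsum_le_tsum_of_inj (fun k => (⟨φ k, hφmem k⟩ : J))
      · intro x y hxy
        simp only [Subtype.mk.injEq] at hxy
        exact hφmono.injective hxy
      · intro c _
        exact pow_nonneg hl0 _
      · intro k
        exact pow_le_pow_of_le_one hl0 hl1.le (hφψ k)
      · exact hfsum
      · exact hsum.subtype J
    have heq : (∑' k : ℕ, lam ^ ψ k) = lam + lam ^ 3 * (1 - lam ^ 2)⁻¹ := by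
      rw [hfsum.tsum_eq_zero_add]
      simp only [hψ0, hψs, pow_one]
      have : ∀ k : ℕ, lam ^ (2 * k + 3) = lam ^ 3 * (lam ^ 2) ^ k := by
        intro k; rw [pow_add, pow_mul]; ring
      rw [tsum_congr this, tsum_mul_left, hgeo]
    linarith [heq ▸ hle]
  constructor
  · have key : lam / (1 + lam) ≤ (∑' j : J, lam ^ (j : ℕ))
        - ∑' j : {j : ℕ | 1 ≤ j ∧ j ∉ J}, lam ^ (j : ℕ) := by
      have hB : (∑' j : {j : ℕ | 1 ≤ j ∧ j ∉ J}, lam ^ (j : ℕ))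
          = lam * (1 - lam)⁻¹ - ∑' j : J, lam ^ (j : ℕ) := by linarith
      rw [hB]
      have harith : lam / (1 + lam)
          = 2 * (lam + lam ^ 3 * (1 - lam ^ 2)⁻¹) - lam * (1 - lam)⁻¹ := by
        field_simp
        ring
      rw [harith]
      linarith
    exact le_trans key (le_abs_self _)
  · rw [hodd, heven]
    have hnn : (0:ℝ) ≤ lam * (1 - lam ^ 2)⁻¹ - lam ^ 2 * (1 - lam ^ 2)⁻¹ := by
      have : lam ^ 2 ≤ lam := by nlinarith
      have hinv : (0:ℝ) ≤ (1 - lam ^ 2)⁻¹ := (inv_pos.mpr h1msq).le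
      nlinarith
    rw [abs_of_nonneg hnn]
    field_simp
    ring
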